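/- Let B be a Boolean algebra, Y ⊆ B a subset, and x ∈ B. Then x does NOT belong to the Boolean subalgebra of B generated by Y if and only if there exist two Boolean algebra homomorphisms h₁, h₂ : B → Bool such that h₁ y = h₂ y for every y ∈ Y, while h₁ x ≠ h₂ x. -/
import Mathlib


open Cardinal

universe u v

variable {B : Type*} [BooleanAlgebra B]

/-- A subset of a Boolean algebra containing `⊥` and `⊤` and closed under
meet, join and complement. -/
def IsBoolSubalgebra (S : Set B) : Prop :=
  ⊥ ∈ S ∧ ⊤ ∈ S ∧ (∀ a ∈ S, ∀ b ∈ S, a ⊓ b ∈ S) ∧ (∀ a ∈ S, ∀ b ∈ S, a ⊔ b ∈ S) ∧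
    ∀ a ∈ S, aᶜ ∈ S

/-- The Boolean subalgebra of `B` generated by `Y`: the smallest subset of `B`
containing `Y` which contains `⊥`, `⊤` and is closed under meet, join and complement. -/
def boolGen (Y : Set B) : Set B :=
  ⋂₀ {S : Set B | IsBoolSubalgebra S ∧ Y ⊆ S}

lemma subset_boolGen (Y : Set B) : Y ⊆ boolGen Y :=
  fun _y hy => Set.mem_sInter.2 fun _S hS => hS.2 hy

lemma isBoolSubalgebra_boolGen (Y : Set B) : IsBoolSubalgebra (boolGen Y) := by
  refine ⟨?_, ?_, ?_, ?_, ?_⟩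
  · exact Set.mem_sInter.2 fun S hS => hS.1.1
  · exact Set.mem_sInter.2 fun S hS => hS.1.2.1
  · exact fun a ha b hb => Set.mem_sInter.2 fun S hS =>
      hS.1.2.2.1 a (ha S hS) b (hb S hS)
  · exact fun a ha b hb => Set.mem_sInter.2 fun S hS =>
      hS.1.2.2.2.1 a (ha S hS) b (hb S hS)
  · exact fun a ha => Set.mem_sInter.2 fun S hS => hS.1.2.2.2.2 a (ha S hS)

/-- A subset `X` of a Boolean algebra is irredundant if no `x ∈ X` lies in the
Boolean subalgebra generated by `X \ {x}`. -/
def Irredundant (X : Set B) : Prop := ∀ x ∈ X, x ∉ boolGen (X \ {x})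

/-- `irr B`: the supremum of the cardinalities `|X|` of irredundant subsets `X ⊆ B`. -/
noncomputable def irr (B : Type u) [BooleanAlgebra B] : Cardinal.{u} :=
  ⨆ X : {X : Set B // Irredundant X}, #X.1

/-- `irr⁺ B`: the supremum of the successor cardinals `|X|⁺` over irredundant
subsets `X ⊆ B`. -/
noncomputable def irrPlus (B : Type u) [BooleanAlgebra B] : Cardinal.{u} :=
  ⨆ X : {X : Set B // Irredundant X}, Order.succ #X.1

/-- Auxiliary: a proper filter on a Boolean algebra, as a set. -/
def IsBFilter (F : Set B) : Prop :=
  ⊤ ∈ F ∧ ⊥ ∉ F ∧ (∀ a ∈ F, ∀ b ∈ F, a ⊓ b ∈ F) ∧ ∀ a ∈ F, ∀ b, a ≤ b → b ∈ F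

/-- Auxiliary: an ultrafilter, as a set. -/
def IsUltraF (F : Set B) : Prop := IsBFilter F ∧ ∀ b : B, b ∈ F ∨ bᶜ ∈ F

lemma IsUltraF.not_mem_of_compl_mem {F : Set B} (hF : IsUltraF F) {b : B}
    (h : bᶜ ∈ F) : b ∉ F := fun hb =>
  hF.1.2.1 (by simpa using hF.1.2.2.1 b hb bᶜ h)

lemma exists_ultra_extension {F : Set B} (hF : IsBFilter F) :
    ∃ U, IsUltraF U ∧ F ⊆ U := by
  have hchain : ∀ c ⊆ {G : Set B | IsBFilter G}, IsChain (· ⊆ ·) c → c.Nonempty →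
      ∃ ub ∈ {G : Set B | IsBFilter G}, ∀ s ∈ c, s ⊆ ub := by
    intro c hcS hc hcne
    refine ⟨⋃₀ c, ?_, fun s hs => Set.subset_sUnion_of_mem hs⟩
    obtain ⟨G0, hG0⟩ := hcne
    refine ⟨Set.mem_sUnion.2 ⟨G0, hG0, (hcS hG0).1⟩, ?_, ?_, ?_⟩
    · rintro ⟨G, hG, hbot⟩
      exact (hcS hG).2.1 hbot
    · rintro a ⟨G1, hG1, ha⟩ b ⟨G2, hG2, hbm⟩
      rcases hc.total hG1 hG2 with h | h
      · exact ⟨G2, hG2, (hcS hG2).2.2.1 a (h ha) b hbm⟩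
      · exact ⟨G1, hG1, (hcS hG1).2.2.1 a ha b (h hbm)⟩
    · rintro a ⟨G1, hG1, ha⟩ b hab
      exact ⟨G1, hG1, (hcS hG1).2.2.2 a ha b hab⟩
  obtain ⟨m, hFm, hm⟩ := zorn_subset_nonempty {G : Set B | IsBFilter G} hchain F hF
  · refine ⟨m, ⟨hm.1, ?_⟩, hFm⟩
    intro b
    by_contra hb
    push_neg at hb
    set G : Set B := {c | ∃ a ∈ m, a ⊓ b ≤ c} with hGdef
    have hmG : m ⊆ G := fun a ha => ⟨a, ha, inf_le_left⟩
    have hGfil : IsBFilter G := by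
      refine ⟨⟨⊤, hm.1.1, le_top⟩, ?_, ?_, ?_⟩
      · rintro ⟨a, ha, hle⟩
        have : a ≤ bᶜ := by
          rwa [le_compl_iff_disjoint_right, disjoint_iff_inf_le]
        exact hb.2 (hm.1.2.2.2 a ha bᶜ this)
      · rintro c1 ⟨a1, ha1, h1⟩ c2 ⟨a2, ha2, h2⟩
        refine ⟨a1 ⊓ a2, hm.1.2.2.1 a1 ha1 a2 ha2, ?_⟩
        calc a1 ⊓ a2 ⊓ b = (a1 ⊓ b) ⊓ (a2 ⊓ b) := by
              rw [inf_inf_distrib_right]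
          _ ≤ c1 ⊓ c2 := inf_le_inf h1 h2
      · rintro c ⟨a, ha, h1⟩ d hcd
        exact ⟨a, ha, h1.trans hcd⟩
    have : G ⊆ m := hm.2 hGfil hmG
    exact hb.1 (this ⟨⊤, hm.1.1, by simp⟩)

lemma IsUltraF.mem_inf {U : Set B} (hU : IsUltraF U) {a b : B} :
    a ⊓ b ∈ U ↔ a ∈ U ∧ b ∈ U := by
  constructor
  · intro h
    exact ⟨hU.1.2.2.2 _ h a inf_le_left, hU.1.2.2.2 _ h b inf_le_right⟩
  · rintro ⟨ha, hb⟩; exact hU.1.2.2.1 a ha b hb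

lemma IsUltraF.mem_sup {U : Set B} (hU : IsUltraF U) {a b : B} :
    a ⊔ b ∈ U ↔ a ∈ U ∨ b ∈ U := by
  constructor
  · intro h
    by_contra hcon
    push_neg at hcon
    have ha : aᶜ ∈ U := (hU.2 a).resolve_left hcon.1
    have hb : bᶜ ∈ U := (hU.2 b).resolve_left hcon.2
    have : (a ⊔ b)ᶜ ∈ U := by rw [compl_sup]; exact hU.1.2.2.1 _ ha _ hb
    exact hU.not_mem_of_compl_mem this h
  · rintro (h | h)
    · exact hU.1.2.2.2 a h _ le_sup_left
    · exact hU.1.2.2.2 b h _ le_sup_right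

open Classical in
/-- The homomorphism to `Bool` attached to an ultrafilter. -/
noncomputable def ultraHom (U : Set B) (hU : IsUltraF U) : BoundedLatticeHom B Bool where
  toFun b := if b ∈ U then true else false
  map_sup' a b := by
    by_cases ha : a ∈ U <;> by_cases hb : b ∈ U <;>
      simp [ha, hb, hU.mem_sup]
  map_inf' a b := by
    by_cases ha : a ∈ U <;> by_cases hb : b ∈ U <;>
      simp [ha, hb, hU.mem_inf]
  map_top' := by simp [hU.1.1]
  map_bot' := by simp [hU.1.2.1]

open Classical in
lemma ultraHom_apply (U : Set B) (hU : IsUltraF U) (b : B) :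
    ultraHom U hU b = if b ∈ U then true else false := rfl

/-- `x` does not belong to the Boolean subalgebra generated by `Y` iff
two homomorphisms `B → Bool` agree on `Y` but differ at `x`. -/
theorem statement8 {B : Type u} [BooleanAlgebra B] (Y : Set B) (x : B) :
    x ∉ boolGen Y ↔ ∃ h₁ h₂ : BoundedLatticeHom B Bool,
      (∀ y ∈ Y, h₁ y = h₂ y) ∧ h₁ x ≠ h₂ x := by
  classical
  constructor
  · intro hx
    set S := boolGen Y with hSdef
    have hS := isBoolSubalgebra_boolGen Y
    obtain ⟨hbot, htop, hinf, hsup, hcompl⟩ := hS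
    -- Step 1: an ultrafilter U₀ avoiding every s ∈ S below x or below xᶜ
    set F₀ : Set B := {c | ∃ a ∈ S, ∃ b ∈ S, a ≤ x ∧ b ≤ xᶜ ∧ aᶜ ⊓ bᶜ ≤ c} with hF₀def
    have hF₀ : IsBFilter F₀ := by
      refine ⟨⟨⊥, hbot, ⊥, hbot, bot_le, bot_le, le_top⟩, ?_, ?_, ?_⟩
      · rintro ⟨a, haS, b, hbS, hax, hbx, hle⟩
        have hab : a ⊔ b = ⊤ := by
          have : aᶜ ⊓ bᶜ = ⊥ := le_bot_iff.1 hle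
          have := congrArg compl this
          simpa [compl_inf] using this
        have hba : bᶜ ≤ a := by
          calc bᶜ = bᶜ ⊓ (a ⊔ b) := by rw [hab, inf_top_eq]
            _ = (bᶜ ⊓ a) ⊔ (bᶜ ⊓ b) := inf_sup_left _ _ _
            _ = bᶜ ⊓ a := by simp
            _ ≤ a := inf_le_right
        have hxb : x ≤ bᶜ := by simpa using compl_le_compl hbx
        have hxa : x = a := le_antisymm (hxb.trans hba) hax
        exact hx (hxa ▸ haS)
      · rintro c1 ⟨a1, ha1, b1, hb1, hax1, hbx1, h1⟩ c2 ⟨a2, ha2, b2, hb2, hax2, hbx2, h2⟩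
        refine ⟨a1 ⊔ a2, hsup a1 ha1 a2 ha2, b1 ⊔ b2, hsup b1 hb1 b2 hb2,
          sup_le hax1 hax2, sup_le hbx1 hbx2, ?_⟩
        rw [compl_sup, compl_sup]
        calc a1ᶜ ⊓ a2ᶜ ⊓ (b1ᶜ ⊓ b2ᶜ) ≤ (a1ᶜ ⊓ b1ᶜ) ⊓ (a2ᶜ ⊓ b2ᶜ) := by
              rw [inf_assoc, inf_left_comm a2ᶜ, ← inf_assoc]
          _ ≤ c1 ⊓ c2 := inf_le_inf h1 h2
      · rintro c ⟨a, ha, b, hb, hax, hbx, h1⟩ d hcd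
        exact ⟨a, ha, b, hb, hax, hbx, h1.trans hcd⟩
    obtain ⟨U₀, hU₀, hF₀U₀⟩ := exists_ultra_extension hF₀
    have hkey : ∀ s ∈ S, (s ≤ x ∨ s ≤ xᶜ) → s ∉ U₀ := by
      intro s hsS hs
      apply hU₀.not_mem_of_compl_mem
      apply hF₀U₀
      rcases hs with h | h
      · exact ⟨s, hsS, ⊥, hbot, h, bot_le, by simp⟩
      · exact ⟨⊥, hbot, s, hsS, bot_le, h, by simp⟩
    -- Step 2: two filters extending the trace of U₀ on S
    have hV : ∀ z : B, ∀ᵉ (s ∈ S), True := fun _ _ _ => trivial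
    set F₁ : Set B := {c | ∃ u, u ∈ S ∧ u ∈ U₀ ∧ u ⊓ x ≤ c} with hF₁def
    set F₂ : Set B := {c | ∃ u, u ∈ S ∧ u ∈ U₀ ∧ u ⊓ xᶜ ≤ c} with hF₂def
    have hF₁ : IsBFilter F₁ := by
      refine ⟨⟨⊤, htop, hU₀.1.1, le_top⟩, ?_, ?_, ?_⟩
      · rintro ⟨u, huS, huU, hle⟩
        have : u ≤ xᶜ := by rwa [le_compl_iff_disjoint_right, disjoint_iff_inf_le]
        exact hkey u huS (Or.inr this) huU
      · rintro c1 ⟨u1, h1S, h1U, h1⟩ c2 ⟨u2, h2S, h2U, h2⟩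
        refine ⟨u1 ⊓ u2, hinf u1 h1S u2 h2S, hU₀.1.2.2.1 u1 h1U u2 h2U, ?_⟩
        calc u1 ⊓ u2 ⊓ x = (u1 ⊓ x) ⊓ (u2 ⊓ x) := by rw [inf_inf_distrib_right]
          _ ≤ c1 ⊓ c2 := inf_le_inf h1 h2
      · rintro c ⟨u, huS, huU, h1⟩ d hcd
        exact ⟨u, huS, huU, h1.trans hcd⟩
    have hF₂ : IsBFilter F₂ := by
      refine ⟨⟨⊤, htop, hU₀.1.1, le_top⟩, ?_, ?_, ?_⟩
      · rintro ⟨u, huS, huU, hle⟩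
        have : u ≤ x := by
          have : u ≤ xᶜᶜ := by rwa [le_compl_iff_disjoint_right, disjoint_iff_inf_le]
          simpa using this
        exact hkey u huS (Or.inl this) huU
      · rintro c1 ⟨u1, h1S, h1U, h1⟩ c2 ⟨u2, h2S, h2U, h2⟩
        refine ⟨u1 ⊓ u2, hinf u1 h1S u2 h2S, hU₀.1.2.2.1 u1 h1U u2 h2U, ?_⟩
        calc u1 ⊓ u2 ⊓ xᶜ = (u1 ⊓ xᶜ) ⊓ (u2 ⊓ xᶜ) := by rw [inf_inf_distrib_right]
          _ ≤ c1 ⊓ c2 := inf_le_inf h1 h2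
      · rintro c ⟨u, huS, huU, h1⟩ d hcd
        exact ⟨u, huS, huU, h1.trans hcd⟩
    obtain ⟨U₁, hU₁, hFU₁⟩ := exists_ultra_extension hF₁
    obtain ⟨U₂, hU₂, hFU₂⟩ := exists_ultra_extension hF₂
    have hxU₁ : x ∈ U₁ := hFU₁ ⟨⊤, htop, hU₀.1.1, by simp⟩
    have hxU₂ : x ∉ U₂ := hU₂.not_mem_of_compl_mem (hFU₂ ⟨⊤, htop, hU₀.1.1, by simp⟩)
    have hagree : ∀ s ∈ S, (s ∈ U₁ ↔ s ∈ U₂) := by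
      intro s hsS
      by_cases hsU : s ∈ U₀
      · have h1 : s ∈ U₁ := hFU₁ ⟨s, hsS, hsU, inf_le_left⟩
        have h2 : s ∈ U₂ := hFU₂ ⟨s, hsS, hsU, inf_le_left⟩
        simp [h1, h2]
      · have hsc : sᶜ ∈ U₀ := (hU₀.2 s).resolve_left hsU
        have h1 : sᶜ ∈ U₁ := hFU₁ ⟨sᶜ, hcompl s hsS, hsc, inf_le_left⟩
        have h2 : sᶜ ∈ U₂ := hFU₂ ⟨sᶜ, hcompl s hsS, hsc, inf_le_left⟩
        simp [hU₁.not_mem_of_compl_mem h1, hU₂.not_mem_of_compl_mem h2]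
    refine ⟨ultraHom U₁ hU₁, ultraHom U₂ hU₂, ?_, ?_⟩
    · intro y hy
      have := hagree y (subset_boolGen Y hy)
      simp only [ultraHom_apply]
      by_cases h : y ∈ U₁
      · simp [h, this.1 h]
      · have h2 : y ∉ U₂ := fun hh => h (this.2 hh)
        simp [h, h2]
    · simp [ultraHom_apply, hxU₁, hxU₂]
  · rintro ⟨h₁, h₂, hagree, hne⟩ hx
    apply hne
    set S : Set B := {b | h₁ b = h₂ b} with hSdef
    have : IsBoolSubalgebra S := by
      refine ⟨by simp [hSdef, Set.mem_setOf_eq, map_bot], by simp [hSdef, Set.mem_setOf_eq, map_top], ?_, ?_, ?_⟩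
      · intro a ha b hb
        simp only [hSdef, Set.mem_setOf_eq, map_inf] at *
        rw [ha, hb]
      · intro a ha b hb
        simp only [hSdef, Set.mem_setOf_eq, map_sup] at *
        rw [ha, hb]
      · intro a ha
        simp only [hSdef, Set.mem_setOf_eq] at *
        have key : ∀ (h : BoundedLatticeHom B Bool) (a : B), h aᶜ = (h a)ᶜ := by
          intro h a
          have h1 : h a ⊓ h aᶜ = ⊥ := by rw [← map_inf]; simp
          have h2 : h a ⊔ h aᶜ = ⊤ := by rw [← map_sup]; simp
          exact (isCompl_iff.2 ⟨disjoint_iff.2 h1, codisjoint_iff.2 h2⟩).compl_eq.symm ▸ rfl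
        rw [key h₁, key h₂, ha]
    exact hx S ⟨this, fun y hy => hagree y hy⟩
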